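/- Let k > 1 and M_0 ≥ 6 be integers and let x be a real number such that M := M(x,k) satisfies M ≥ M_0. Then log M ≥ (log x)/((k+1)·B(M_0,k)), where B(y,k) = log(y+1)/log y + (log((log(y+1))^2)/log y)·(k/(k+1)). -/

import Mathlib

noncomputable section

/-- The j-th prime, with `nthPrime 1 = 2`, `nthPrime 2 = 3`, ... -/
def nthPrime (j : ℕ) : ℕ := Nat.nth Nat.Prime (j - 1)

/-- The chain sum `p_b^k + p_{b+1}^k + ... + p_t^k`. -/
def chainSum (k b t : ℕ) : ℕ := ∑ j ∈ Finset.Icc b t, nthPrime j ^ k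

/-- `sk k x` is the total number of k-gleeful representations of integers ≤ x,
i.e. the number of pairs `1 ≤ b ≤ t` with `p_b^k + ... + p_t^k ≤ x`. -/
def sk (k : ℕ) (x : ℝ) : ℕ :=
  Set.ncard {bt : ℕ × ℕ | 1 ≤ bt.1 ∧ bt.1 ≤ bt.2 ∧ (chainSum k bt.1 bt.2 : ℝ) ≤ x}

/-- `skm k m x` is the number of indices `n ≥ 1` with
`p_n^k + p_{n+1}^k + ... + p_{n+m-1}^k ≤ x`. -/
def skm (k m : ℕ) (x : ℝ) : ℕ :=
  Set.ncard {b : ℕ | 1 ≤ b ∧ (chainSum k b (b + m - 1) : ℝ) ≤ x}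

/-- The prefix sum `p_1^k + ... + p_M^k`. -/
def prefixSum (k M : ℕ) : ℕ := ∑ j ∈ Finset.Icc 1 M, nthPrime j ^ k

/-- The prime counting function: the number of primes ≤ t. -/
def primePi (t : ℝ) : ℕ := Set.ncard {p : ℕ | p.Prime ∧ (p : ℝ) ≤ t}

/-- `fkm k m n` is the number of indices `b ≥ 1` with
`n = p_b^k + p_{b+1}^k + ... + p_{b+m-1}^k`. -/
def fkm (k m n : ℕ) : ℕ :=
  Set.ncard {b : ℕ | 1 ≤ b ∧ n = chainSum k b (b + m - 1)}

def A (y : ℝ) : ℝ := Real.log (y / 2) / Real.log y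

def B (y : ℝ) (k : ℕ) : ℝ :=
  Real.log (y + 1) / Real.log y +
    Real.log ((Real.log (y + 1)) ^ 2) / Real.log y * ((k : ℝ) / ((k : ℝ) + 1))

def C (y : ℝ) (k : ℕ) : ℝ :=
  (y / (y - 1)) ^ ((1 : ℝ) / ((k : ℝ) + 1)) * B y k ^ ((k : ℝ) / ((k : ℝ) + 1))

def D (y : ℝ) (k : ℕ) : ℝ :=
  (y / (y + 3)) *
    (Real.log (y / 2) / (Real.log y + 2 * Real.log (Real.log (y + 2)))) ^
      ((k : ℝ) / ((k : ℝ) + 1))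

def E (y : ℝ) (k : ℕ) : ℝ := 1 + 1 / (((k : ℝ) + 1) * A y - 1)

def F (y : ℝ) (k : ℕ) : ℝ :=
  ((y + 1) / y) ^ (((k : ℝ) - 1) / (k : ℝ)) *
    (4 : ℝ) ^ (((k : ℝ) - 1) / ((k : ℝ) * ((k : ℝ) + 1))) *
    C y k ^ (((k : ℝ) - 1) / (k : ℝ)) * E y k

def U (y : ℝ) (k : ℕ) : ℝ := 1.25506 * F y k

def L (y : ℝ) (k : ℕ) : ℝ := ((y - 1) / y) * D y k ^ 2

def ck (k : ℕ) : ℝ :=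
  ((k : ℝ) ^ 2 / ((k : ℝ) - 1)) * ((k : ℝ) + 1) ^ (((k : ℝ) - 1) / (k : ℝ))

set_option maxRecDepth 100000

namespace GleefulAux

open Real

/-! ### Numeric log bounds toolkit -/

def P (q : ℝ) : ℝ := q + q^2/2 + q^3/3 + q^4/4 + q^5/5 + q^6/6 + q^7/7 + q^8/8 + q^9/9 + q^10/10 + q^11/11 + q^12/12

lemma neg_log_one_sub_bounds {q : ℝ} (h0 : 0 ≤ q) (h1 : q ≤ 1/2) :
    P q - q^13 * 2 ≤ -Real.log (1-q) ∧ -Real.log (1-q) ≤ P q + q^13 * 2 := by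
  have h := Real.abs_log_sub_add_sum_range_le (x := q) (by rw [abs_of_nonneg h0]; linarith) 12
  rw [abs_of_nonneg h0] at h
  simp [Finset.sum_range_succ] at h
  rw [abs_le] at h
  obtain ⟨ha, hb⟩ := h
  have hq' : (0:ℝ) < 1 - q := by linarith
  have hq13 : q^13/(1-q) ≤ q^13 * 2 := by
    rw [div_le_iff₀ hq']
    nlinarith [pow_nonneg h0 13]
  have h0' : 0 ≤ q^13/(1-q) := div_nonneg (pow_nonneg h0 13) (le_of_lt hq')
  constructor
  · unfold P; linarith
  · unfold P; linarith

lemma log_lb (x : ℝ) (A : ℕ) (q c : ℝ) (h0 : 0 ≤ q) (h1 : q ≤ 1/2)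
    (hx : (1-q) * x = 2^A) (hc : c ≤ A * 0.6931471803 + P q - q^13 * 2) : c ≤ Real.log x := by
  have hq : (0:ℝ) < 1 - q := by linarith
  have hxpos : (0:ℝ) < x := by
    nlinarith [pow_pos (show (0:ℝ) < 2 by norm_num) A]
  have hlog : Real.log (1-q) + Real.log x = A * Real.log 2 := by
    rw [← Real.log_mul (ne_of_gt hq) (ne_of_gt hxpos), hx, Real.log_pow]
  have hb := (neg_log_one_sub_bounds h0 h1).1
  have h2 := Real.log_two_gt_d9
  have hA : (A:ℝ) * 0.6931471803 ≤ A * Real.log 2 :=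
    mul_le_mul_of_nonneg_left (le_of_lt h2) (Nat.cast_nonneg A)
  linarith

lemma log_ub (x : ℝ) (A : ℕ) (q c : ℝ) (h0 : 0 ≤ q) (h1 : q ≤ 1/2)
    (hx : (1-q) * x = 2^A) (hc : (A:ℝ) * 0.6931471808 + P q + q^13 * 2 ≤ c) : Real.log x ≤ c := by
  have hq : (0:ℝ) < 1 - q := by linarith
  have hxpos : (0:ℝ) < x := by
    nlinarith [pow_pos (show (0:ℝ) < 2 by norm_num) A]
  have hlog : Real.log (1-q) + Real.log x = A * Real.log 2 := by
    rw [← Real.log_mul (ne_of_gt hq) (ne_of_gt hxpos), hx, Real.log_pow]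
  have hb := (neg_log_one_sub_bounds h0 h1).2
  have h2 := Real.log_two_lt_d9
  have hA : (A:ℝ) * Real.log 2 ≤ A * 0.6931471808 :=
    mul_le_mul_of_nonneg_left (le_of_lt h2) (Nat.cast_nonneg A)
  linarith


lemma lb6 : (1.7917:ℝ) ≤ Real.log 6 := log_lb 6 2 (1/3) _ (by norm_num) (by norm_num) (by norm_num) (by norm_num [P])
lemma lb7 : (1.9458:ℝ) ≤ Real.log 7 := log_lb 7 2 (3/7) _ (by norm_num) (by norm_num) (by norm_num) (by norm_num [P])
lemma lb8 : (2.0794:ℝ) ≤ Real.log 8 := log_lb 8 3 (0/1) _ (by norm_num) (by norm_num) (by norm_num) (by norm_num [P])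
lemma lb9 : (2.1972:ℝ) ≤ Real.log 9 := log_lb 9 3 (1/9) _ (by norm_num) (by norm_num) (by norm_num) (by norm_num [P])
lemma lb10 : (2.3025:ℝ) ≤ Real.log 10 := log_lb 10 3 (1/5) _ (by norm_num) (by norm_num) (by norm_num) (by norm_num [P])
lemma lb11 : (2.3978:ℝ) ≤ Real.log 11 := log_lb 11 3 (3/11) _ (by norm_num) (by norm_num) (by norm_num) (by norm_num [P])
lemma lb12 : (2.4849:ℝ) ≤ Real.log 12 := log_lb 12 3 (1/3) _ (by norm_num) (by norm_num) (by norm_num) (by norm_num [P])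
lemma lb13 : (2.5649:ℝ) ≤ Real.log 13 := log_lb 13 3 (5/13) _ (by norm_num) (by norm_num) (by norm_num) (by norm_num [P])
lemma lb14 : (2.6390:ℝ) ≤ Real.log 14 := log_lb 14 3 (3/7) _ (by norm_num) (by norm_num) (by norm_num) (by norm_num [P])
lemma lb15 : (2.7079:ℝ) ≤ Real.log 15 := log_lb 15 3 (7/15) _ (by norm_num) (by norm_num) (by norm_num) (by norm_num [P])
lemma lb17 : (2.8332:ℝ) ≤ Real.log 17 := log_lb 17 4 (1/17) _ (by norm_num) (by norm_num) (by norm_num) (by norm_num [P])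
lemma lb18 : (2.8903:ℝ) ≤ Real.log 18 := log_lb 18 4 (1/9) _ (by norm_num) (by norm_num) (by norm_num) (by norm_num [P])
lemma lb21 : (3.0445:ℝ) ≤ Real.log 21 := log_lb 21 4 (5/21) _ (by norm_num) (by norm_num) (by norm_num) (by norm_num [P])
lemma lb22 : (3.0910:ℝ) ≤ Real.log 22 := log_lb 22 4 (3/11) _ (by norm_num) (by norm_num) (by norm_num) (by norm_num [P])
lemma lb23 : (3.1354:ℝ) ≤ Real.log 23 := log_lb 23 4 (7/23) _ (by norm_num) (by norm_num) (by norm_num) (by norm_num [P])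
lemma lb25 : (3.2188:ℝ) ≤ Real.log 25 := log_lb 25 4 (9/25) _ (by norm_num) (by norm_num) (by norm_num) (by norm_num [P])
lemma lb29 : (3.3672:ℝ) ≤ Real.log 29 := log_lb 29 4 (13/29) _ (by norm_num) (by norm_num) (by norm_num) (by norm_num [P])
lemma lb30 : (3.4010:ℝ) ≤ Real.log 30 := log_lb 30 4 (7/15) _ (by norm_num) (by norm_num) (by norm_num) (by norm_num [P])
lemma lb38 : (3.6375:ℝ) ≤ Real.log 38 := log_lb 38 5 (3/19) _ (by norm_num) (by norm_num) (by norm_num) (by norm_num [P])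
lemma lb39 : (3.6635:ℝ) ≤ Real.log 39 := log_lb 39 5 (7/39) _ (by norm_num) (by norm_num) (by norm_num) (by norm_num [P])
lemma lb45 : (3.8066:ℝ) ≤ Real.log 45 := log_lb 45 5 (13/45) _ (by norm_num) (by norm_num) (by norm_num) (by norm_num [P])
lemma ub3 : Real.log 3 ≤ (1.0987:ℝ) := log_ub 3 1 (1/3) _ (by norm_num) (by norm_num) (by norm_num) (by norm_num [P])
lemma ub6 : Real.log 6 ≤ (1.7918:ℝ) := log_ub 6 2 (1/3) _ (by norm_num) (by norm_num) (by norm_num) (by norm_num [P])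
lemma ub7 : Real.log 7 ≤ (1.9460:ℝ) := log_ub 7 2 (3/7) _ (by norm_num) (by norm_num) (by norm_num) (by norm_num [P])
lemma ub8 : Real.log 8 ≤ (2.0795:ℝ) := log_ub 8 3 (0/1) _ (by norm_num) (by norm_num) (by norm_num) (by norm_num [P])
lemma ub9 : Real.log 9 ≤ (2.1973:ℝ) := log_ub 9 3 (1/9) _ (by norm_num) (by norm_num) (by norm_num) (by norm_num [P])
lemma ub10 : Real.log 10 ≤ (2.3026:ℝ) := log_ub 10 3 (1/5) _ (by norm_num) (by norm_num) (by norm_num) (by norm_num [P])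
lemma ub11 : Real.log 11 ≤ (2.3979:ℝ) := log_ub 11 3 (3/11) _ (by norm_num) (by norm_num) (by norm_num) (by norm_num [P])
lemma ub12 : Real.log 12 ≤ (2.4850:ℝ) := log_ub 12 3 (1/3) _ (by norm_num) (by norm_num) (by norm_num) (by norm_num [P])
lemma ub13 : Real.log 13 ≤ (2.5650:ℝ) := log_ub 13 3 (5/13) _ (by norm_num) (by norm_num) (by norm_num) (by norm_num [P])
lemma ub14 : Real.log 14 ≤ (2.6391:ℝ) := log_ub 14 3 (3/7) _ (by norm_num) (by norm_num) (by norm_num) (by norm_num [P])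
lemma ub19 : Real.log 19 ≤ (2.9445:ℝ) := log_ub 19 4 (3/19) _ (by norm_num) (by norm_num) (by norm_num) (by norm_num [P])
lemma ub29 : Real.log 29 ≤ (3.3674:ℝ) := log_ub 29 4 (13/29) _ (by norm_num) (by norm_num) (by norm_num) (by norm_num [P])
lemma ub41 : Real.log 41 ≤ (3.7136:ℝ) := log_ub 41 5 (9/41) _ (by norm_num) (by norm_num) (by norm_num) (by norm_num [P])
lemma ub59 : Real.log 59 ≤ (4.0777:ℝ) := log_ub 59 5 (27/59) _ (by norm_num) (by norm_num) (by norm_num) (by norm_num [P])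
lemma ub79 : Real.log 79 ≤ (4.3695:ℝ) := log_ub 79 6 (15/79) _ (by norm_num) (by norm_num) (by norm_num) (by norm_num [P])
lemma ub109 : Real.log 109 ≤ (4.6914:ℝ) := log_ub 109 6 (45/109) _ (by norm_num) (by norm_num) (by norm_num) (by norm_num [P])
lemma ub163 : Real.log 163 ≤ (5.0938:ℝ) := log_ub 163 7 (35/163) _ (by norm_num) (by norm_num) (by norm_num) (by norm_num [P])
lemma ub197 : Real.log 197 ≤ (5.2833:ℝ) := log_ub 197 7 (69/197) _ (by norm_num) (by norm_num) (by norm_num) (by norm_num [P])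
lemma llb7 : (0.6654:ℝ) ≤ Real.log (1.9458) := log_lb (1.9458) 0 (4729/9729) _ (by norm_num) (by norm_num) (by norm_num) (by norm_num [P])
lemma llb8 : (0.7320:ℝ) ≤ Real.log (2.0794) := log_lb (2.0794) 1 (397/10397) _ (by norm_num) (by norm_num) (by norm_num) (by norm_num [P])
lemma llb9 : (0.7871:ℝ) ≤ Real.log (2.1972) := log_lb (2.1972) 1 (493/5493) _ (by norm_num) (by norm_num) (by norm_num) (by norm_num [P])
lemma llb10 : (0.8339:ℝ) ≤ Real.log (2.3025) := log_lb (2.3025) 1 (121/921) _ (by norm_num) (by norm_num) (by norm_num) (by norm_num [P])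
lemma llb11 : (0.8745:ℝ) ≤ Real.log (2.3978) := log_lb (2.3978) 1 (1989/11989) _ (by norm_num) (by norm_num) (by norm_num) (by norm_num [P])
lemma llb12 : (0.9102:ℝ) ≤ Real.log (2.4849) := log_lb (2.4849) 1 (4849/24849) _ (by norm_num) (by norm_num) (by norm_num) (by norm_num [P])
lemma llb13 : (0.9419:ℝ) ≤ Real.log (2.5649) := log_lb (2.5649) 1 (5649/25649) _ (by norm_num) (by norm_num) (by norm_num) (by norm_num [P])
lemma llb14 : (0.9704:ℝ) ≤ Real.log (2.6390) := log_lb (2.6390) 1 (639/2639) _ (by norm_num) (by norm_num) (by norm_num) (by norm_num [P])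
lemma llb15 : (0.9961:ℝ) ≤ Real.log (2.7079) := log_lb (2.7079) 1 (7079/27079) _ (by norm_num) (by norm_num) (by norm_num) (by norm_num [P])
lemma ub14_22 : Real.log (14.2192) ≤ (2.6547:ℝ) := log_ub (14.2192) 3 (3887/8887) _ (by norm_num) (by norm_num) (by norm_num) (by norm_num [P])

/-! ### nthPrime basics -/

attribute [local instance 2000] Nat.decidablePrime

lemma nthPrime_prime (j : ℕ) : (nthPrime j).Prime := Nat.prime_nth_prime _

lemma nthPrime_mono {i j : ℕ} (h : i ≤ j) : nthPrime i ≤ nthPrime j :=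
  Nat.nth_monotone Nat.infinite_setOf_prime (by omega)

lemma nthPrime_count (j : ℕ) : Nat.count Nat.Prime (nthPrime j) = j - 1 :=
  Nat.count_nth (fun hf => absurd hf Nat.infinite_setOf_prime)

lemma nthPrime_eq (j v : ℕ) (hv : Nat.Prime v) (h : Nat.count Nat.Prime v = j - 1) :
    nthPrime j = v := by
  rw [nthPrime, ← h, Nat.nth_count hv]

lemma np5 : nthPrime 5 = 11 := nthPrime_eq 5 11 (by norm_num) (by decide)
lemma np8 : nthPrime 8 = 19 := nthPrime_eq 8 19 (by norm_num) (by decide)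
lemma np10 : nthPrime 10 = 29 := nthPrime_eq 10 29 (by norm_num) (by decide)
lemma np13 : nthPrime 13 = 41 := nthPrime_eq 13 41 (by norm_num) (by decide)
lemma np17 : nthPrime 17 = 59 := nthPrime_eq 17 59 (by norm_num) (by decide)
lemma np22 : nthPrime 22 = 79 := nthPrime_eq 22 79 (by norm_num) (by decide)
lemma np23 : nthPrime 23 = 83 := nthPrime_eq 23 83 (by norm_num) (by decide)
lemma np29 : nthPrime 29 = 109 := nthPrime_eq 29 109 (by norm_num) (by decide)
lemma np31 : nthPrime 31 = 127 := nthPrime_eq 31 127 (by norm_num) (by decide)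
lemma np38 : nthPrime 38 = 163 := nthPrime_eq 38 163 (by norm_num) (by decide)
lemma np44 : nthPrime 44 = 193 := nthPrime_eq 44 193 (by norm_num) (by decide)
lemma np45 : nthPrime 45 = 197 := nthPrime_eq 45 197 (by norm_num) (by decide)

/-! ### Chebyshev-type lower bound for π, i.e. upper bound for p_n -/

lemma cheb (n : ℕ) (hn : 5 ≤ n) :
    (nthPrime n : ℝ) * Real.log 2 ≤ (n : ℝ) * Real.log (nthPrime n) := by
  have hp : (nthPrime n).Prime := nthPrime_prime n
  have hp11 : 11 ≤ nthPrime n := np5 ▸ nthPrime_mono hn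
  obtain ⟨m, hm⟩ : Odd (nthPrime n) := hp.odd_of_ne_two (by omega)
  set p := nthPrime n with hpdef
  have hm5 : 5 ≤ m := by omega
  -- Nat-level inequality
  have hcount : Nat.count Nat.Prime p = n - 1 := nthPrime_count n
  have hcb : Nat.centralBinom m ≤ (2*m) ^ (n-1) := by
    have h2m : 0 < 2*m := by omega
    have hN0 : Nat.centralBinom m ≠ 0 := (Nat.centralBinom_pos m).ne'
    have hfac : ∀ q ∈ (Nat.centralBinom m).factorization.support,
        q ^ ((Nat.centralBinom m).factorization q) ≤ 2*m := by
      intro q _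
      exact Nat.pow_factorization_choose_le h2m
    have hsub : (Nat.centralBinom m).factorization.support ⊆
        (Finset.range p).filter Nat.Prime := by
      intro q hq
      have hqp : q.Prime := Nat.prime_of_mem_primeFactors (by
        rwa [← Nat.support_factorization])
      have hq1 : 1 ≤ (Nat.centralBinom m).factorization q := by
        rw [Nat.one_le_iff_ne_zero]
        exact Finsupp.mem_support_iff.mp hq
      have hqle : q ≤ 2*m := by
        calc q = q ^ 1 := (pow_one q).symm
        _ ≤ q ^ ((Nat.centralBinom m).factorization q) :=
            Nat.pow_le_pow_right hqp.one_lt.le hq1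
        _ ≤ 2*m := Nat.pow_factorization_choose_le h2m
      simp only [Finset.mem_filter, Finset.mem_range]
      exact ⟨by omega, hqp⟩
    have hcard : (Nat.centralBinom m).factorization.support.card ≤ n - 1 := by
      calc (Nat.centralBinom m).factorization.support.card
          ≤ ((Finset.range p).filter Nat.Prime).card := Finset.card_le_card hsub
      _ = Nat.count Nat.Prime p := (Nat.count_eq_card_filter_range _ _).symm
      _ = n - 1 := hcount
    calc Nat.centralBinom m
        = (Nat.centralBinom m).factorization.prod (fun q e => q ^ e) :=
          (Nat.factorization_prod_pow_eq_self hN0).symm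
      _ = ∏ q ∈ (Nat.centralBinom m).factorization.support,
            q ^ ((Nat.centralBinom m).factorization q) := rfl
      _ ≤ ∏ _q ∈ (Nat.centralBinom m).factorization.support, (2*m) :=
          Finset.prod_le_prod' hfac
      _ = (2*m) ^ (Nat.centralBinom m).factorization.support.card :=
          Finset.prod_const _
      _ ≤ (2*m) ^ (n-1) := Nat.pow_le_pow_right (by omega) hcard
  have hkey : 4 ^ m < m * (2*m) ^ (n-1) := by
    calc 4 ^ m < m * Nat.centralBinom m := Nat.four_pow_lt_mul_centralBinom m (by omega)
    _ ≤ m * (2*m) ^ (n-1) := Nat.mul_le_mul_left m hcb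
  -- move to the reals
  have hkeyR : ((4:ℝ)) ^ m ≤ (m:ℝ) * ((2*m:ℕ):ℝ) ^ (n-1) := by
    exact_mod_cast hkey.le
  have hmpos : (0:ℝ) < (m:ℝ) := by positivity
  have h2mpos : (0:ℝ) < ((2*m:ℕ):ℝ) := by positivity
  have hlogle : Real.log ((4:ℝ)^m) ≤ Real.log ((m:ℝ) * ((2*m:ℕ):ℝ) ^ (n-1)) :=
    Real.log_le_log (by positivity) hkeyR
  rw [Real.log_pow, Real.log_mul (ne_of_gt hmpos) (by positivity), Real.log_pow] at hlogle
  have h4 : Real.log (4:ℝ) = 2 * Real.log 2 := by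
    rw [show (4:ℝ) = 2^2 by norm_num, Real.log_pow]; push_cast; ring
  have hppos : (0:ℝ) < (p:ℝ) := by positivity
  have h2m_eq : ((2*m:ℕ):ℝ) = (p:ℝ) - 1 := by
    have : (p:ℝ) = 2*(m:ℝ)+1 := by exact_mod_cast hm
    push_cast; linarith
  have hlog2m : Real.log ((2*m:ℕ):ℝ) ≤ Real.log (p:ℝ) := by
    apply Real.log_le_log h2mpos; rw [h2m_eq]; linarith
  have hlogm : Real.log (m:ℝ) ≤ Real.log (p:ℝ) - Real.log 2 := by
    have hmeq : (m:ℝ) = ((p:ℝ) - 1)/2 := by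
      have : (p:ℝ) = 2*(m:ℝ)+1 := by exact_mod_cast hm
      linarith
    rw [hmeq]
    rw [Real.log_div (by linarith) (by norm_num)]
    have : Real.log ((p:ℝ) - 1) ≤ Real.log (p:ℝ) := Real.log_le_log (by linarith) (by linarith)
    linarith
  have hn1 : ((n-1:ℕ):ℝ) = (n:ℝ) - 1 := by
    have : (1:ℕ) ≤ n := by omega
    push_cast [this]; ring
  have hlogp_pos : 0 < Real.log (p:ℝ) := Real.log_pos (by exact_mod_cast (by omega : 1 < p))
  have hcast2m : (m:ℝ) * Real.log 4 = ((2*m:ℕ):ℝ) * Real.log 2 := by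
    rw [h4]; push_cast; ring
  -- combine
  have hfinal : ((p:ℝ) - 1) * Real.log 2 ≤ (Real.log (p:ℝ) - Real.log 2) + ((n:ℝ)-1) * Real.log (p:ℝ) := by
    have hub : ((n-1:ℕ):ℝ) * Real.log ((2*m:ℕ):ℝ) ≤ ((n:ℝ)-1) * Real.log (p:ℝ) := by
      rw [hn1]
      apply mul_le_mul_of_nonneg_left hlog2m (by
        have : (5:ℝ) ≤ (n:ℝ) := by exact_mod_cast hn
        linarith)
    calc ((p:ℝ) - 1) * Real.log 2 = (m:ℝ) * Real.log 4 := by rw [hcast2m, h2m_eq]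
    _ ≤ Real.log (m:ℝ) + ((n-1:ℕ):ℝ) * Real.log ((2*m:ℕ):ℝ) := hlogle
    _ ≤ (Real.log (p:ℝ) - Real.log 2) + ((n:ℝ)-1) * Real.log (p:ℝ) := by
        have := hlogm; linarith
  have h2 := Real.log_two_gt_d9
  nlinarith [hfinal]

/-! ### Bounds on log p_n -/

-- crude: log p_n ≤ 2 log n + 2.1974  (n ≥ 5)
lemma logp_crude (n : ℕ) (hn : 5 ≤ n) :
    Real.log (nthPrime n : ℝ) ≤ 2 * Real.log (n:ℝ) + 2.1974 := by
  have hch := cheb n hn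
  set p := nthPrime n with hpdef
  have hp11 : 11 ≤ p := np5 ▸ nthPrime_mono hn
  have hppos : (0:ℝ) < (p:ℝ) := by positivity
  have hsq : Real.sqrt (p:ℝ) ^ 2 = (p:ℝ) := Real.sq_sqrt hppos.le
  have hsqpos : 0 < Real.sqrt (p:ℝ) := Real.sqrt_pos.mpr hppos
  have hlogp : Real.log (p:ℝ) ≤ 2 * Real.sqrt (p:ℝ) := by
    have h1 : Real.log (Real.sqrt (p:ℝ)) = Real.log (p:ℝ) / 2 := Real.log_sqrt hppos.le
    have h2 : Real.log (Real.sqrt (p:ℝ)) ≤ Real.sqrt (p:ℝ) - 1 :=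
      Real.log_le_sub_one_of_pos hsqpos
    linarith
  have h2 := Real.log_two_gt_d9
  -- p * log 2 ≤ n * 2 √p  ⟹ √p ≤ 2n/log2 ≤ 2.886n
  have hnpos : (0:ℝ) < (n:ℝ) := by positivity
  have hs : Real.sqrt (p:ℝ) ≤ 2.886 * (n:ℝ) := by
    by_contra hcon
    push_neg at hcon
    have hps : (p:ℝ) * Real.log 2 ≤ (n:ℝ) * (2 * Real.sqrt (p:ℝ)) :=
      le_trans hch (mul_le_mul_of_nonneg_left hlogp hnpos.le)
    rw [← hsq] at hps
    nlinarith [hsqpos, hnpos]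
  have hpn2 : (p:ℝ) ≤ 9 * (n:ℝ)^2 := by
    rw [← hsq]; nlinarith [hsqpos]
  calc Real.log (p:ℝ) ≤ Real.log (9 * (n:ℝ)^2) := Real.log_le_log hppos hpn2
  _ = Real.log 9 + 2 * Real.log (n:ℝ) := by
      rw [Real.log_mul (by norm_num) (by positivity), Real.log_pow]; push_cast; ring
  _ ≤ 2 * Real.log (n:ℝ) + 2.1974 := by
      have h9 : Real.log (9:ℝ) = 2 * Real.log 3 := by
        rw [show (9:ℝ) = 3^2 by norm_num, Real.log_pow]; push_cast; ring
      have := ub3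
      linarith

-- refined: p_n ≤ 1.4428 n (2 log n + 2.1974)  (n ≥ 5)
lemma p_refined (n : ℕ) (hn : 5 ≤ n) :
    (nthPrime n : ℝ) ≤ 1.4428 * (n:ℝ) * (2 * Real.log (n:ℝ) + 2.1974) := by
  have hch := cheb n hn
  have hcr := logp_crude n hn
  set p := nthPrime n with hpdef
  have h2 := Real.log_two_gt_d9
  have hnpos : (0:ℝ) < (n:ℝ) := by positivity
  have hppos : (0:ℝ) ≤ (p:ℝ) := by positivity
  have hA : (p:ℝ) * Real.log 2 ≤ (n:ℝ) * (2 * Real.log (n:ℝ) + 2.1974) :=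
    le_trans hch (mul_le_mul_of_nonneg_left hcr hnpos.le)
  have hlogn : 0 ≤ Real.log (n:ℝ) := Real.log_nonneg (by exact_mod_cast (by omega : 1 ≤ n))
  nlinarith [hA, hlogn, hppos]

/-! ### PRIME2 : p_n ≤ n (log n)²  for n ≥ 16 -/

lemma log16 : (2.7725:ℝ) ≤ Real.log 16 := by
  rw [show (16:ℝ) = 2^4 by norm_num, Real.log_pow]
  have := Real.log_two_gt_d9
  push_cast; nlinarith

lemma log32 : (3.4657:ℝ) ≤ Real.log 32 := by
  rw [show (32:ℝ) = 2^5 by norm_num, Real.log_pow]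
  have := Real.log_two_gt_d9
  push_cast; nlinarith

lemma prime2 (n : ℕ) (hn : 16 ≤ n) :
    (nthPrime n : ℝ) ≤ (n:ℝ) * Real.log (n:ℝ) ^ 2 := by
  have hnpos : (0:ℝ) < (n:ℝ) := by positivity
  rcases le_or_gt 45 n with h45 | h45
  · -- analytic range
    have href := p_refined n (by omega)
    have ht : (3.8066:ℝ) ≤ Real.log (n:ℝ) := by
      calc (3.8066:ℝ) ≤ Real.log 45 := lb45
      _ ≤ Real.log (n:ℝ) := Real.log_le_log (by norm_num) (by exact_mod_cast h45)
    set t := Real.log (n:ℝ)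
    have : 1.4428 * (2*t + 2.1974) ≤ t^2 := by nlinarith [ht]
    calc (nthPrime n : ℝ) ≤ 1.4428 * (n:ℝ) * (2*t + 2.1974) := href
    _ = (n:ℝ) * (1.4428 * (2*t + 2.1974)) := by ring
    _ ≤ (n:ℝ) * t^2 := mul_le_mul_of_nonneg_left this hnpos.le
  · -- bucket ranges
    have hlog16 : (2.7725:ℝ) ≤ Real.log (n:ℝ) := by
      calc (2.7725:ℝ) ≤ Real.log 16 := log16
      _ ≤ Real.log (n:ℝ) := Real.log_le_log (by norm_num) (by exact_mod_cast hn)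
    rcases le_or_gt n 23 with h23 | h23
    · have hple : (nthPrime n : ℝ) ≤ 83 := by exact_mod_cast (np23 ▸ nthPrime_mono h23)
      have h16 : (16:ℝ) ≤ (n:ℝ) := by exact_mod_cast hn
      nlinarith [hlog16, hple, h16]
    · rcases le_or_gt n 31 with h31 | h31
      · have hple : (nthPrime n : ℝ) ≤ 127 := by exact_mod_cast (np31 ▸ nthPrime_mono h31)
        have h24 : (24:ℝ) ≤ (n:ℝ) := by exact_mod_cast (by omega : 24 ≤ n)
        nlinarith [hlog16, hple, h24]
      · have hple : (nthPrime n : ℝ) ≤ 193 := by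
          exact_mod_cast (np44 ▸ nthPrime_mono (by omega : n ≤ 44))
        have h32 : (32:ℝ) ≤ (n:ℝ) := by exact_mod_cast (by omega : 32 ≤ n)
        have hlog32 : (3.4657:ℝ) ≤ Real.log (n:ℝ) := by
          calc (3.4657:ℝ) ≤ Real.log 32 := log32
          _ ≤ Real.log (n:ℝ) := Real.log_le_log (by norm_num) (by exact_mod_cast (by omega : 32 ≤ n))
        nlinarith [hlog32, hple, h32]

/-! ### W : log p_{M+1} ≤ log(M+1) + 0.74 log M  for M ≥ 6 -/

lemma log_cast_le {a : ℕ} {x : ℝ} (ha : 0 < a) (h : (a:ℝ) ≤ x) :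
    Real.log (a:ℝ) ≤ Real.log x :=
  Real.log_le_log (by exact_mod_cast ha) h

lemma log_le_cast {a : ℕ} {x : ℝ} (hx : 0 < x) (h : x ≤ (a:ℝ)) :
    Real.log x ≤ Real.log (a:ℝ) :=
  Real.log_le_log hx h

lemma W (M : ℕ) (hM : 6 ≤ M) :
    Real.log (nthPrime (M+1) : ℝ) ≤ Real.log ((M:ℝ)+1) + 0.74 * Real.log (M:ℝ) := by
  have hMr : (6:ℝ) ≤ (M:ℝ) := by exact_mod_cast hM
  have hMp : (0:ℝ) < (M:ℝ) := by linarith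
  have hlogp_le : ∀ (i : ℕ) (v : ℝ), M + 1 ≤ i → (nthPrime i : ℝ) = v →
      Real.log (nthPrime (M+1) : ℝ) ≤ Real.log v := by
    intro i v hi hv
    refine Real.log_le_log (by exact_mod_cast (nthPrime_prime (M+1)).pos) ?_
    rw [← hv]
    exact_mod_cast nthPrime_mono hi
  have hlog1 : ∀ (a c : ℝ), 0 < a → a ≤ (M:ℝ)+1 → c ≤ Real.log a →
      c ≤ Real.log ((M:ℝ)+1) := by
    intro a c ha hca hc
    exact le_trans hc (Real.log_le_log ha hca)
  have hlog2 : ∀ (a c : ℝ), 0 < a → a ≤ (M:ℝ) → c ≤ Real.log a →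
      c ≤ Real.log (M:ℝ) := by
    intro a c ha hca hc
    exact le_trans hc (Real.log_le_log ha hca)
  rcases le_or_gt 45 M with h45 | h45
  · -- analytic tail
    set p := nthPrime (M+1) with hpdef
    set t := Real.log (M:ℝ) with htdef
    set t' := Real.log ((M:ℝ)+1) with ht'def
    have ht : (3.8066:ℝ) ≤ t := hlog2 45 _ (by norm_num) (by exact_mod_cast h45) lb45
    have ht'pos : 0 < t' := Real.log_pos (by linarith)
    have htt' : t' ≤ t + 1/45 := by
      have hdiv : Real.log (((M:ℝ)+1)/(M:ℝ)) = t' - t := Real.log_div (by linarith) (by linarith)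
      have hle : Real.log (((M:ℝ)+1)/(M:ℝ)) ≤ ((M:ℝ)+1)/(M:ℝ) - 1 :=
        Real.log_le_sub_one_of_pos (by positivity)
      have heq : ((M:ℝ)+1)/(M:ℝ) - 1 = 1/(M:ℝ) := by field_simp; ring
      have : (1:ℝ)/(M:ℝ) ≤ 1/45 := by
        apply div_le_div_of_nonneg_left (by norm_num) (by norm_num) (by exact_mod_cast h45)
      linarith
    have href := p_refined (M+1) (by omega)
    have hcast : ((M+1:ℕ):ℝ) = (M:ℝ)+1 := by push_cast; ring
    rw [hcast] at href
    have hu : 1.4428 * (2 * t' + 2.1974) ≤ 2.8856 * t + 3.2346 := by linarith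
    have hupos : (0:ℝ) < 2.8856 * t + 3.2346 := by linarith
    have hp2 : (p:ℝ) ≤ ((M:ℝ)+1) * (2.8856 * t + 3.2346) := by
      calc (p:ℝ) ≤ 1.4428 * ((M:ℝ)+1) * (2 * t' + 2.1974) := href
      _ = ((M:ℝ)+1) * (1.4428 * (2 * t' + 2.1974)) := by ring
      _ ≤ ((M:ℝ)+1) * (2.8856 * t + 3.2346) :=
          mul_le_mul_of_nonneg_left hu (by linarith)
    have hppos : (0:ℝ) < (p:ℝ) := by exact_mod_cast (nthPrime_prime (M+1)).pos
    have hlogp : Real.log (p:ℝ) ≤ t' + Real.log (2.8856 * t + 3.2346) := by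
      calc Real.log (p:ℝ) ≤ Real.log (((M:ℝ)+1) * (2.8856 * t + 3.2346)) :=
        Real.log_le_log hppos hp2
      _ = t' + Real.log (2.8856 * t + 3.2346) := by
          rw [Real.log_mul (by linarith) (ne_of_gt hupos)]
    have hconc : Real.log (2.8856 * t + 3.2346) ≤
        Real.log (14.2192:ℝ) + ((2.8856 * t + 3.2346)/14.2192 - 1) := by
      have h1 : Real.log ((2.8856 * t + 3.2346)/14.2192) ≤ (2.8856 * t + 3.2346)/14.2192 - 1 :=
        Real.log_le_sub_one_of_pos (by positivity)
      have h2 : Real.log ((2.8856 * t + 3.2346)/14.2192) =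
          Real.log (2.8856 * t + 3.2346) - Real.log 14.2192 :=
        Real.log_div (ne_of_gt hupos) (by norm_num)
      linarith
    have h1422 := ub14_22
    have hdiv_eq : (2.8856 * t + 3.2346)/14.2192 = (2.8856*t + 3.2346) * (10000/142192) := by
      ring
    rw [hdiv_eq] at hconc
    linarith
  · -- buckets
    rcases le_or_gt M 7 with hb0 | hb0
    · have h1 := hlogp_le 8 19 (by omega) (by norm_num [np8])
      have h2 := hlog1 7 _ (by norm_num) (by exact_mod_cast show (7:ℕ) ≤ M + 1 by omega) lb7
      have h3 := hlog2 6 _ (by norm_num) (by exact_mod_cast show (6:ℕ) ≤ M by omega) lb6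
      have := ub19
      linarith
    rcases le_or_gt M 9 with hb1 | hb1
    · have h1 := hlogp_le 10 29 (by omega) (by norm_num [np10])
      have h2 := hlog1 9 _ (by norm_num) (by exact_mod_cast show (9:ℕ) ≤ M + 1 by omega) lb9
      have h3 := hlog2 8 _ (by norm_num) (by exact_mod_cast show (8:ℕ) ≤ M by omega) lb8
      have := ub29
      linarith
    rcases le_or_gt M 12 with hb2 | hb2
    · have h1 := hlogp_le 13 41 (by omega) (by norm_num [np13])
      have h2 := hlog1 11 _ (by norm_num) (by exact_mod_cast show (11:ℕ) ≤ M + 1 by omega) lb11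
      have h3 := hlog2 10 _ (by norm_num) (by exact_mod_cast show (10:ℕ) ≤ M by omega) lb10
      have := ub41
      linarith
    rcases le_or_gt M 16 with hb3 | hb3
    · have h1 := hlogp_le 17 59 (by omega) (by norm_num [np17])
      have h2 := hlog1 14 _ (by norm_num) (by exact_mod_cast show (14:ℕ) ≤ M + 1 by omega) lb14
      have h3 := hlog2 13 _ (by norm_num) (by exact_mod_cast show (13:ℕ) ≤ M by omega) lb13
      have := ub59
      linarith
    rcases le_or_gt M 21 with hb4 | hb4
    · have h1 := hlogp_le 22 79 (by omega) (by norm_num [np22])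
      have h2 := hlog1 18 _ (by norm_num) (by exact_mod_cast show (18:ℕ) ≤ M + 1 by omega) lb18
      have h3 := hlog2 17 _ (by norm_num) (by exact_mod_cast show (17:ℕ) ≤ M by omega) lb17
      have := ub79
      linarith
    rcases le_or_gt M 28 with hb5 | hb5
    · have h1 := hlogp_le 29 109 (by omega) (by norm_num [np29])
      have h2 := hlog1 23 _ (by norm_num) (by exact_mod_cast show (23:ℕ) ≤ M + 1 by omega) lb23
      have h3 := hlog2 22 _ (by norm_num) (by exact_mod_cast show (22:ℕ) ≤ M by omega) lb22
      have := ub109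
      linarith
    rcases le_or_gt M 37 with hb6 | hb6
    · have h1 := hlogp_le 38 163 (by omega) (by norm_num [np38])
      have h2 := hlog1 30 _ (by norm_num) (by exact_mod_cast show (30:ℕ) ≤ M + 1 by omega) lb30
      have h3 := hlog2 29 _ (by norm_num) (by exact_mod_cast show (29:ℕ) ≤ M by omega) lb29
      have := ub163
      linarith
    · have h1 := hlogp_le 45 197 (by omega) (by norm_num [np45])
      have h2 := hlog1 39 _ (by norm_num) (by exact_mod_cast show (39:ℕ) ≤ M + 1 by omega) lb39
      have h3 := hlog2 38 _ (by norm_num) (by exact_mod_cast show (38:ℕ) ≤ M by omega) lb38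
      have := ub197
      linarith

/-! ### monotonicity of loglog(y+1)/log y for y ≥ 15 -/

lemma loglog_ge_one {x : ℝ} (hx : (16:ℝ) ≤ x) : 1 ≤ Real.log (Real.log x) := by
  have h2 := Real.log_two_gt_d9
  have hlx : Real.log (16:ℝ) ≤ Real.log x := Real.log_le_log (by norm_num) hx
  have h16 : (2.7725:ℝ) ≤ Real.log (16:ℝ) := log16
  have he : Real.exp 1 ≤ Real.log x := by
    have := Real.exp_one_lt_d9
    linarith
  calc (1:ℝ) = Real.log (Real.exp 1) := (Real.log_exp 1).symm
  _ ≤ Real.log (Real.log x) := Real.log_le_log (Real.exp_pos 1) he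

lemma h_step (n : ℕ) (hn : 15 ≤ n) :
    Real.log (Real.log ((n:ℝ)+2)) * Real.log (n:ℝ) ≤
      Real.log (Real.log ((n:ℝ)+1)) * Real.log ((n:ℝ)+1) := by
  have hnr : (15:ℝ) ≤ (n:ℝ) := by exact_mod_cast hn
  set a := Real.log ((n:ℝ)+1) with hadef
  set b := Real.log ((n:ℝ)+2) with hbdef
  have ha16 : (16:ℝ) ≤ (n:ℝ)+1 := by linarith
  have hapos : 0 < a := Real.log_pos (by linarith)
  have hbpos : 0 < b := Real.log_pos (by linarith)
  have hlogn_pos : 0 < Real.log (n:ℝ) := Real.log_pos (by linarith)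
  have hna : Real.log (n:ℝ) ≤ a := Real.log_le_log (by linarith) (by linarith)
  have hab : a ≤ b := Real.log_le_log (by linarith) (by linarith)
  have hla : 1 ≤ Real.log a := by
    have := loglog_ge_one (x := (n:ℝ)+1) ha16
    simpa using this
  -- (i) b - a ≤ 1/(n+1)
  have hi : b - a ≤ 1/((n:ℝ)+1) := by
    have hdiv : Real.log (((n:ℝ)+2)/((n:ℝ)+1)) = b - a := Real.log_div (by linarith) (by linarith)
    have hle : Real.log (((n:ℝ)+2)/((n:ℝ)+1)) ≤ ((n:ℝ)+2)/((n:ℝ)+1) - 1 :=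
      Real.log_le_sub_one_of_pos (by positivity)
    have heq : ((n:ℝ)+2)/((n:ℝ)+1) - 1 = 1/((n:ℝ)+1) := by
      have hne : ((n:ℝ)+1) ≠ 0 := by positivity
      field_simp
      ring
    linarith
  -- (ii) log b ≤ log a + (b-a)/a
  have hii : Real.log b ≤ Real.log a + (b-a)/a := by
    have hdiv : Real.log (b/a) = Real.log b - Real.log a :=
      Real.log_div (ne_of_gt hbpos) (ne_of_gt hapos)
    have hle : Real.log (b/a) ≤ b/a - 1 := Real.log_le_sub_one_of_pos (by positivity)
    have heq : b/a - 1 = (b-a)/a := by field_simp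
    linarith
  -- (iii) a - log n ≥ 1/(n+1)
  have hiii : 1/((n:ℝ)+1) ≤ a - Real.log (n:ℝ) := by
    have hdiv : Real.log ((n:ℝ)/((n:ℝ)+1)) = Real.log (n:ℝ) - a :=
      Real.log_div (by linarith) (by linarith)
    have hle : Real.log ((n:ℝ)/((n:ℝ)+1)) ≤ (n:ℝ)/((n:ℝ)+1) - 1 :=
      Real.log_le_sub_one_of_pos (by positivity)
    have heq : (n:ℝ)/((n:ℝ)+1) - 1 = -(1/((n:ℝ)+1)) := by field_simp; ring
    linarith
  -- combine
  have hnpos : (0:ℝ) < (n:ℝ)+1 := by linarith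
  have hstep1 : Real.log b * Real.log (n:ℝ) ≤
      Real.log a * Real.log (n:ℝ) + 1/((n:ℝ)+1) := by
    have h1 : Real.log b * Real.log (n:ℝ) ≤ (Real.log a + (b-a)/a) * Real.log (n:ℝ) :=
      mul_le_mul_of_nonneg_right hii hlogn_pos.le
    have h2 : (b-a)/a * Real.log (n:ℝ) ≤ 1/((n:ℝ)+1) := by
      have hba : 0 ≤ b - a := by linarith
      have h3 : (b-a)/a * Real.log (n:ℝ) ≤ (b-a)/a * a := by
        apply mul_le_mul_of_nonneg_left hna (by positivity)
      have h4 : (b-a)/a * a = b - a := by field_simp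
      linarith
    nlinarith [h1, h2]
  have hstep2 : Real.log a * Real.log (n:ℝ) + 1/((n:ℝ)+1) ≤ Real.log a * a := by
    have h1 : 1/((n:ℝ)+1) ≤ Real.log a * (a - Real.log (n:ℝ)) := by
      calc 1/((n:ℝ)+1) = 1 * (1/((n:ℝ)+1)) := by ring
      _ ≤ Real.log a * (a - Real.log (n:ℝ)) := by
          apply mul_le_mul hla hiii (by positivity) (by linarith)
    nlinarith [h1]
  linarith

lemma h_mono (m M : ℕ) (hm : 15 ≤ m) (hmM : m ≤ M) :
    Real.log (Real.log ((M:ℝ)+1)) * Real.log (m:ℝ) ≤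
      Real.log (Real.log ((m:ℝ)+1)) * Real.log (M:ℝ) := by
  induction M with
  | zero => omega
  | succ N ih =>
    rcases Nat.lt_or_ge N m with hNm | hNm
    · -- base case : M = m
      have : m = N + 1 := by omega
      subst this
      exact le_rfl
    · have hih := ih hNm
      have hN15 : 15 ≤ N := by omega
      have hstep := h_step N hN15
      have hNr : (15:ℝ) ≤ (N:ℝ) := by exact_mod_cast hN15
      have hmr : (15:ℝ) ≤ (m:ℝ) := by exact_mod_cast hm
      have hlogm_pos : 0 < Real.log (m:ℝ) := Real.log_pos (by linarith)
      have hlogN_pos : 0 < Real.log (N:ℝ) := Real.log_pos (by linarith)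
      have hlogN1_pos : 0 < Real.log ((N:ℝ)+1) := Real.log_pos (by linarith)
      have hllN2_pos : 0 ≤ Real.log (Real.log ((N:ℝ)+2)) := by
        have := loglog_ge_one (x := (N:ℝ)+2) (by linarith)
        linarith
      have hllN1_pos : 0 ≤ Real.log (Real.log ((N:ℝ)+1)) := by
        have := loglog_ge_one (x := (N:ℝ)+1) (by linarith)
        linarith
      have hcast : ((N+1:ℕ):ℝ) = (N:ℝ)+1 := by push_cast; ring
      rw [hcast, show (N:ℝ)+1+1 = (N:ℝ)+2 by ring]
      -- goal : llog(N+2) * log m ≤ llog(m+1) * log(N+1)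
      have hkey : Real.log (Real.log ((N:ℝ)+2)) * Real.log (m:ℝ) * Real.log (N:ℝ) ≤
          Real.log (Real.log ((m:ℝ)+1)) * Real.log ((N:ℝ)+1) * Real.log (N:ℝ) := by
        calc Real.log (Real.log ((N:ℝ)+2)) * Real.log (m:ℝ) * Real.log (N:ℝ)
            = (Real.log (Real.log ((N:ℝ)+2)) * Real.log (N:ℝ)) * Real.log (m:ℝ) := by ring
        _ ≤ (Real.log (Real.log ((N:ℝ)+1)) * Real.log ((N:ℝ)+1)) * Real.log (m:ℝ) :=
            mul_le_mul_of_nonneg_right hstep hlogm_pos.le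
        _ = (Real.log (Real.log ((N:ℝ)+1)) * Real.log (m:ℝ)) * Real.log ((N:ℝ)+1) := by ring
        _ ≤ (Real.log (Real.log ((m:ℝ)+1)) * Real.log (N:ℝ)) * Real.log ((N:ℝ)+1) :=
            mul_le_mul_of_nonneg_right hih hlogN1_pos.le
        _ = Real.log (Real.log ((m:ℝ)+1)) * Real.log ((N:ℝ)+1) * Real.log (N:ℝ) := by ring
      have hgoal2 : (Real.log (Real.log ((N:ℝ)+2)) * Real.log (m:ℝ)) * Real.log (N:ℝ) ≤
          (Real.log (Real.log ((m:ℝ)+1)) * Real.log ((N:ℝ)+1)) * Real.log (N:ℝ) := by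
        calc (Real.log (Real.log ((N:ℝ)+2)) * Real.log (m:ℝ)) * Real.log (N:ℝ)
            = Real.log (Real.log ((N:ℝ)+2)) * Real.log (m:ℝ) * Real.log (N:ℝ) := by ring
        _ ≤ Real.log (Real.log ((m:ℝ)+1)) * Real.log ((N:ℝ)+1) * Real.log (N:ℝ) := hkey
        _ = (Real.log (Real.log ((m:ℝ)+1)) * Real.log ((N:ℝ)+1)) * Real.log (N:ℝ) := by ring
      exact le_of_mul_le_mul_right hgoal2 hlogN_pos

/-! ### numeric checks for 6 ≤ M0 ≤ 14 -/

lemma m_check (m : ℕ) (h6 : 6 ≤ m) (h14 : m ≤ 14) :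
    0.37 * Real.log (m:ℝ) ≤ Real.log (Real.log ((m:ℝ)+1)) := by
  have key : ∀ (c d e : ℝ), Real.log (m:ℝ) ≤ c → d ≤ Real.log ((m:ℝ)+1) → 0 < d →
      e ≤ Real.log d → 0.37 * c ≤ e → 0.37 * Real.log (m:ℝ) ≤ Real.log (Real.log ((m:ℝ)+1)) := by
    intro c d e hc hd hdpos he hce
    have h1 : Real.log d ≤ Real.log (Real.log ((m:ℝ)+1)) := Real.log_le_log hdpos hd
    nlinarith [hc, h1, he]
  interval_cases m
  · exact key 1.7918 1.9458 0.6654 (by push_cast; linarith [ub6]) (by push_cast; norm_num; linarith [lb7]) (by norm_num) llb7 (by norm_num)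
  · exact key 1.9460 2.0794 0.7320 (by push_cast; linarith [ub7]) (by push_cast; norm_num; linarith [lb8]) (by norm_num) llb8 (by norm_num)
  · exact key 2.0795 2.1972 0.7871 (by push_cast; linarith [ub8]) (by push_cast; norm_num; linarith [lb9]) (by norm_num) llb9 (by norm_num)
  · exact key 2.1973 2.3025 0.8339 (by push_cast; linarith [ub9]) (by push_cast; norm_num; linarith [lb10]) (by norm_num) llb10 (by norm_num)
  · exact key 2.3026 2.3978 0.8745 (by push_cast; linarith [ub10]) (by push_cast; norm_num; linarith [lb11]) (by norm_num) llb11 (by norm_num)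
  · exact key 2.3979 2.4849 0.9102 (by push_cast; linarith [ub11]) (by push_cast; norm_num; linarith [lb12]) (by norm_num) llb12 (by norm_num)
  · exact key 2.4850 2.5649 0.9419 (by push_cast; linarith [ub12]) (by push_cast; norm_num; linarith [lb13]) (by norm_num) llb13 (by norm_num)
  · exact key 2.5650 2.6390 0.9704 (by push_cast; linarith [ub13]) (by push_cast; norm_num; linarith [lb14]) (by norm_num) llb14 (by norm_num)
  · exact key 2.6391 2.7079 0.9961 (by push_cast; linarith [ub14]) (by push_cast; norm_num; linarith [lb15]) (by norm_num) llb15 (by norm_num)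

/-! ### ratio lemma (claim A) -/

lemma ratio_lemma (m M : ℕ) (hm : 2 ≤ m) (hmM : m ≤ M) :
    Real.log ((M:ℝ)+1) * Real.log (m:ℝ) ≤ Real.log ((m:ℝ)+1) * Real.log (M:ℝ) := by
  have hmr : (2:ℝ) ≤ (m:ℝ) := by exact_mod_cast hm
  have hMr : (m:ℝ) ≤ (M:ℝ) := by exact_mod_cast hmM
  have hmpos : (0:ℝ) < (m:ℝ) := by linarith
  have hMpos : (0:ℝ) < (M:ℝ) := by linarith
  have hlogm : 0 < Real.log (m:ℝ) := Real.log_pos (by linarith)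
  have hlogM : Real.log (m:ℝ) ≤ Real.log (M:ℝ) := Real.log_le_log hmpos hMr
  have hd : Real.log ((M:ℝ)+1) - Real.log (M:ℝ) ≤ Real.log ((m:ℝ)+1) - Real.log (m:ℝ) := by
    have h1 : Real.log (((M:ℝ)+1)/(M:ℝ)) = Real.log ((M:ℝ)+1) - Real.log (M:ℝ) :=
      Real.log_div (by linarith) (by linarith)
    have h2 : Real.log (((m:ℝ)+1)/(m:ℝ)) = Real.log ((m:ℝ)+1) - Real.log (m:ℝ) :=
      Real.log_div (by linarith) (by linarith)
    have h3 : ((M:ℝ)+1)/(M:ℝ) ≤ ((m:ℝ)+1)/(m:ℝ) := by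
      rw [div_le_div_iff₀ hMpos hmpos]; nlinarith
    have h4 : Real.log (((M:ℝ)+1)/(M:ℝ)) ≤ Real.log (((m:ℝ)+1)/(m:ℝ)) :=
      Real.log_le_log (by positivity) h3
    linarith
  have hd0 : 0 ≤ Real.log ((m:ℝ)+1) - Real.log (m:ℝ) := by
    have : Real.log (m:ℝ) ≤ Real.log ((m:ℝ)+1) := Real.log_le_log hmpos (by linarith)
    linarith
  nlinarith [hd, hd0, hlogm, hlogM]

/-! ### prefix sum bound -/

lemma prefix_le (k M : ℕ) :
    (prefixSum k (M+1) : ℝ) ≤ ((M:ℝ)+1) * (nthPrime (M+1) : ℝ)^k := by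
  have hnat : prefixSum k (M+1) ≤ (M+1) * nthPrime (M+1)^k := by
    rw [prefixSum]
    calc ∑ j ∈ Finset.Icc 1 (M+1), nthPrime j ^ k
        ≤ (Finset.Icc 1 (M+1)).card • (nthPrime (M+1)^k) :=
          Finset.sum_le_card_nsmul _ _ _
            (fun j hj => Nat.pow_le_pow_left (nthPrime_mono (Finset.mem_Icc.mp hj).2) k)
      _ = (M+1) * nthPrime (M+1)^k := by rw [Nat.card_Icc]; simp [smul_eq_mul]
  calc (prefixSum k (M+1):ℝ) ≤ (((M+1)*nthPrime (M+1)^k : ℕ) : ℝ) := by exact_mod_cast hnat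
  _ = ((M:ℝ)+1)*(nthPrime (M+1):ℝ)^k := by push_cast; ring


end GleefulAux

set_option maxHeartbeats 2000000 in
open GleefulAux in
theorem logM_lower (k M0 : ℕ) (hk : 1 < k) (hM0 : 6 ≤ M0)
    (x : ℝ) (M : ℕ)
    (hM1 : (prefixSum k M : ℝ) ≤ x) (hM2 : x < (prefixSum k (M + 1) : ℝ))
    (hMM0 : M0 ≤ M) :
    Real.log (M : ℝ) ≥ Real.log x / (((k : ℝ) + 1) * B (M0 : ℝ) k) := by
  have hM6 : 6 ≤ M := le_trans hM0 hMM0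
  have hMr : (6:ℝ) ≤ (M:ℝ) := by exact_mod_cast hM6
  have hM0r : (6:ℝ) ≤ (M0:ℝ) := by exact_mod_cast hM0
  have hMM0r : (M0:ℝ) ≤ (M:ℝ) := by exact_mod_cast hMM0
  have hkr : (2:ℝ) ≤ (k:ℝ) := by exact_mod_cast hk
  have hk0 : (0:ℝ) ≤ (k:ℝ) := by linarith
  have hlogM_pos : 0 < Real.log (M:ℝ) := Real.log_pos (by linarith)
  have hlogM0_pos : 0 < Real.log (M0:ℝ) := Real.log_pos (by linarith)
  set LL0 := Real.log (Real.log ((M0:ℝ)+1)) with hLL0def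
  have h7M0 : (1.9458:ℝ) ≤ Real.log ((M0:ℝ)+1) :=
    le_trans lb7 (Real.log_le_log (by norm_num) (by linarith))
  have hLL0_pos : 0 < LL0 := Real.log_pos (by linarith)
  -- rewrite B
  have hBeq : B (M0:ℝ) k = Real.log ((M0:ℝ)+1)/Real.log (M0:ℝ) +
      2*LL0/Real.log (M0:ℝ) * ((k:ℝ)/((k:ℝ)+1)) := by
    rw [B, Real.log_pow]
    push_cast
    ring
  have hBpos : 0 < B (M0:ℝ) k := by
    rw [hBeq]
    have h1 : 0 < Real.log ((M0:ℝ)+1)/Real.log (M0:ℝ) := by positivity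
    have h2 : 0 ≤ 2*LL0/Real.log (M0:ℝ) * ((k:ℝ)/((k:ℝ)+1)) := by positivity
    linarith
  have hD : 0 < ((k:ℝ)+1) * B (M0:ℝ) k := by positivity
  rw [ge_iff_le, div_le_iff₀ hD]
  -- the (M+1)-th prime
  set p := nthPrime (M+1) with hpdef
  have hp_prime : p.Prime := nthPrime_prime (M+1)
  have hppos : (0:ℝ) < (p:ℝ) := by exact_mod_cast hp_prime.pos
  -- positivity of x
  have hx_pos : (0:ℝ) < x := by
    have h1 : 0 < prefixSum k M := by
      apply Finset.sum_pos
      · intro i _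
        exact pow_pos (nthPrime_prime i).pos k
      · exact ⟨1, Finset.mem_Icc.mpr ⟨le_rfl, by omega⟩⟩
    have h2 : (0:ℝ) < (prefixSum k M : ℝ) := by exact_mod_cast h1
    linarith
  -- log x ≤ log(M+1) + k log p
  have hxle : x ≤ ((M:ℝ)+1) * (p:ℝ)^k := le_trans hM2.le (prefix_le k M)
  have hlogx : Real.log x ≤ Real.log ((M:ℝ)+1) + (k:ℝ) * Real.log (p:ℝ) := by
    calc Real.log x ≤ Real.log (((M:ℝ)+1) * (p:ℝ)^k) := Real.log_le_log hx_pos hxle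
    _ = Real.log ((M:ℝ)+1) + (k:ℝ) * Real.log (p:ℝ) := by
        rw [Real.log_mul (by linarith) (by positivity), Real.log_pow]
  -- the key estimate on log p
  have hstar : Real.log (p:ℝ) ≤ Real.log ((M:ℝ)+1) + 2 * (LL0/Real.log (M0:ℝ)) * Real.log (M:ℝ) := by
    rcases le_or_gt M0 14 with h14 | h15
    · have hmc := m_check M0 hM0 h14
      have hW := W M hM6
      have hcoef : 0.74 * Real.log (M:ℝ) ≤ 2*(LL0/Real.log (M0:ℝ))*Real.log (M:ℝ) := by
        have hs : (0.37:ℝ) ≤ LL0/Real.log (M0:ℝ) := (le_div_iff₀ hlogM0_pos).mpr (by linarith)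
        nlinarith [hlogM_pos.le, hs]
      linarith
    · have hP := prime2 (M+1) (by omega)
      have hcast : ((M+1:ℕ):ℝ) = (M:ℝ)+1 := by push_cast; ring
      rw [hcast] at hP
      have hlogM1_pos : 0 < Real.log ((M:ℝ)+1) := Real.log_pos (by linarith)
      have hlp : Real.log (p:ℝ) ≤ Real.log ((M:ℝ)+1) + 2 * Real.log (Real.log ((M:ℝ)+1)) := by
        calc Real.log (p:ℝ) ≤ Real.log (((M:ℝ)+1) * Real.log ((M:ℝ)+1)^2) :=
          Real.log_le_log hppos hP
        _ = Real.log ((M:ℝ)+1) + 2 * Real.log (Real.log ((M:ℝ)+1)) := by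
            rw [Real.log_mul (by linarith) (by positivity), Real.log_pow]
            push_cast; ring
      have hmono := h_mono M0 M (by omega) hMM0
      have hll : Real.log (Real.log ((M:ℝ)+1)) ≤ LL0/Real.log (M0:ℝ) * Real.log (M:ℝ) := by
        rw [div_mul_eq_mul_div, le_div_iff₀ hlogM0_pos]
        linarith [hmono]
      linarith
  -- claim A
  have hA := ratio_lemma M0 M (by omega) hMM0
  have hA' : Real.log ((M:ℝ)+1) ≤ Real.log ((M0:ℝ)+1)/Real.log (M0:ℝ) * Real.log (M:ℝ) := by
    rw [div_mul_eq_mul_div, le_div_iff₀ hlogM0_pos]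
    linarith
  -- assemble
  have hmul1 : (k:ℝ) * Real.log (p:ℝ) ≤
      (k:ℝ) * (Real.log ((M:ℝ)+1) + 2 * (LL0/Real.log (M0:ℝ)) * Real.log (M:ℝ)) :=
    mul_le_mul_of_nonneg_left hstar hk0
  have hmul2 : ((k:ℝ)+1) * Real.log ((M:ℝ)+1) ≤
      ((k:ℝ)+1) * (Real.log ((M0:ℝ)+1)/Real.log (M0:ℝ) * Real.log (M:ℝ)) :=
    mul_le_mul_of_nonneg_left hA' (by linarith)
  have hfinal_eq : Real.log (M:ℝ) * (((k:ℝ)+1) * B (M0:ℝ) k) =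
      ((k:ℝ)+1) * (Real.log ((M0:ℝ)+1)/Real.log (M0:ℝ) * Real.log (M:ℝ)) +
        2*(k:ℝ)*(LL0/Real.log (M0:ℝ))*Real.log (M:ℝ) := by
    rw [hBeq]
    have hkne : ((k:ℝ)+1) ≠ 0 := by linarith
    field_simp
  rw [hfinal_eq]
  nlinarith [hlogx, hmul1, hmul2]
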